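/- Let G be a DAG and (i,j), (x,y) two distinct candidate non-edges such that each of G ∪ {(i,j)} and G ∪ {(x,y)} is acyclic, but G ∪ {(i,j),(x,y)} contains a cycle. Then in G there exist directed paths from j to x and from y to i. -/

import Mathlib

def addEdge {V : Type*} (E : V → V → Prop) (i j : V) : V → V → Prop :=
  fun a b => E a b ∨ (a = i ∧ b = j)

def Acyclic {V : Type*} (E : V → V → Prop) : Prop :=
  ∀ v, ¬ Relation.TransGen E v v

lemma rtg_mono' {V : Type*} {R : V → V → Prop} (x y : V) {a b : V}
    (h : Relation.ReflTransGen R a b) : Relation.ReflTransGen (addEdge R x y) a b :=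
  Relation.ReflTransGen.mono (fun _ _ h => Or.inl h) _ _ h

/-- Decompose at the first use of the added edge. -/
lemma firstUse {V : Type*} (R : V → V → Prop) (x y a b : V)
    (h : Relation.ReflTransGen (addEdge R x y) a b) :
    Relation.ReflTransGen R a b ∨
      (Relation.ReflTransGen R a x ∧ Relation.ReflTransGen (addEdge R x y) y b) := by
  induction h using Relation.ReflTransGen.head_induction_on with
  | refl => exact Or.inl .refl
  | head hac hcb ih =>
    rcases hac with hac | ⟨rfl, rfl⟩
    · rcases ih with p | ⟨p, q⟩
      · exact Or.inl (p.head hac)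
      · exact Or.inr ⟨p.head hac, q⟩
    · exact Or.inr ⟨.refl, hcb⟩

/-- Decompose at the last use of the added edge. -/
lemma lastUse {V : Type*} (R : V → V → Prop) (x y a b : V)
    (h : Relation.ReflTransGen (addEdge R x y) a b) :
    Relation.ReflTransGen R a b ∨
      (Relation.ReflTransGen (addEdge R x y) a x ∧ Relation.ReflTransGen R y b) := by
  induction h with
  | refl => exact Or.inl .refl
  | tail hab hbc ih =>
    rcases hbc with hbc | ⟨rfl, rfl⟩
    · rcases ih with p | ⟨p, q⟩
      · exact Or.inl (p.tail hbc)
      · exact Or.inr ⟨p, q.tail hbc⟩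
    · exact Or.inr ⟨hab, .refl⟩

lemma tgSplit {V : Type*} (R : V → V → Prop) (x y a b : V)
    (h : Relation.TransGen (addEdge R x y) a b) :
    Relation.TransGen R a b ∨
      (Relation.ReflTransGen (addEdge R x y) a x ∧ Relation.ReflTransGen (addEdge R x y) y b) := by
  induction h with
  | single hab =>
    rcases hab with hab | ⟨rfl, rfl⟩
    · exact Or.inl (.single hab)
    · exact Or.inr ⟨.refl, .refl⟩
  | tail hab hbc ih =>
    rcases hbc with hbc | ⟨rfl, rfl⟩
    · rcases ih with p | ⟨p, q⟩
      · exact Or.inl (p.tail hbc)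
      · exact Or.inr ⟨p, q.tail (Or.inl hbc)⟩
    · rcases ih with p | ⟨p, q⟩
      · exact Or.inr ⟨Relation.ReflTransGen.mono (fun _ _ h => Or.inl h) _ _ (p.to_reflTransGen), .refl⟩
      · exact Or.inr ⟨p, .refl⟩

theorem joint_cycle_paths {V : Type*} (E : V → V → Prop) (i j x y : V)
    (hG : Acyclic E) (hne : (i, j) ≠ (x, y))
    (hijE : ¬ E i j) (hxyE : ¬ E x y)
    (hG1 : Acyclic (addEdge E i j)) (hG2 : Acyclic (addEdge E x y))
    (hcyc : ¬ Acyclic (addEdge (addEdge E i j) x y)) :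
    Relation.ReflTransGen E j x ∧ Relation.ReflTransGen E y i := by
  simp only [Acyclic, not_forall, not_not] at hcyc
  obtain ⟨v, hv⟩ := hcyc
  rcases tgSplit _ x y v v hv with p | ⟨p, q⟩
  · exact absurd p (hG1 v)
  -- a path from y to x in the full graph
  have hyx : Relation.ReflTransGen (addEdge (addEdge E i j) x y) y x := q.trans p
  -- it has a prefix from y to x avoiding (x,y) in addEdge E i j
  have hyx1 : Relation.ReflTransGen (addEdge E i j) y x := by
    rcases firstUse _ x y y x hyx with p | ⟨p, _⟩ <;> exact p
  -- decompose over the (i,j) edge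
  rcases firstUse E i j y x hyx1 with p | ⟨p1, p2⟩
  · -- path y → x in E, plus x → y edge, gives cycle in addEdge E x y
    exact absurd (Relation.TransGen.trans_right (rtg_mono' x y p)
      (.single (Or.inr ⟨rfl, rfl⟩))) (hG2 y)
  · -- p1 : RTG E y i, p2 : RTG (addEdge E i j) j x
    refine ⟨?_, p1⟩
    rcases lastUse E i j j x p2 with q | ⟨_, q2⟩
    · exact q
    · exact q2
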